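/- In the Steiner-tree hardness reduction graph Ĝ built from a degree-3 graph G (complete binary tree B̂ with leaves attached to V(G), pendant neighbors v̂ᵢ, and each edge e=(vᵢ,vⱼ) replaced by a new terminal vertex v'ₑ adjacent to vᵢ and vⱼ), with terminals 𝓣 = {v'ₑ : e ∈ E} ∪ V(B̂): the minimum secluded Steiner tree cost equals |𝓣| + |V(G)| + τ(G), where τ(G) is the minimum vertex cover size of G. -/

import Mathlib

open Finset

/-- Vertices of the Steiner-tree reduction graph `Ĝ`: the `2n−1` nodes of a complete binary
tree `B̂` (in heap order, node `a` has children `2a+1, 2a+2`; its leaves are the nodes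
`n−1,…,2n−2`), the original vertices `vᵢ` of `G`, the pendant vertices `v̂ᵢ`, and one
vertex `v'ₑ` for each edge `e` of `G`. -/
abbrev V18 (n m : ℕ) := Fin (2 * n - 1) ⊕ (Fin n ⊕ (Fin n ⊕ Fin m))

/-- Node of the complete binary tree `B̂`. -/
def tnode {n m : ℕ} (a : Fin (2 * n - 1)) : V18 n m := Sum.inl a
/-- Original vertex `vᵢ`. -/
def origv {n m : ℕ} (i : Fin n) : V18 n m := Sum.inr (Sum.inl i)
/-- Pendant vertex `v̂ᵢ`. -/
def hatv {n m : ℕ} (i : Fin n) : V18 n m := Sum.inr (Sum.inr (Sum.inl i))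
/-- Edge vertex `v'ₑ` for the `j`-th edge. -/
def edgev {n m : ℕ} (j : Fin m) : V18 n m := Sum.inr (Sum.inr (Sum.inr j))

/-- Adjacency (one orientation; symmetrized by `fromRel`): binary-tree edges of `B̂`,
leaf `ℓᵢ` (heap node `n−1+i`) joined to `vᵢ`, pendant edges `vᵢ–v̂ᵢ`, and for each edge
`e = (vᵢ,vⱼ)` of `G` the two edges `v'ₑ–vᵢ`, `v'ₑ–vⱼ`. -/
def adj18 (n m : ℕ) (edges : Fin m → Fin n × Fin n) : V18 n m → V18 n m → Bool
  | Sum.inl a, Sum.inl b => (b.val == 2 * a.val + 1) || (b.val == 2 * a.val + 2)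
  | Sum.inl a, Sum.inr (Sum.inl i) => a.val == (n - 1) + i.val
  | Sum.inr (Sum.inl i), Sum.inr (Sum.inr (Sum.inl i')) => i == i'
  | Sum.inr (Sum.inl i), Sum.inr (Sum.inr (Sum.inr j)) =>
      (edges j).1 == i || (edges j).2 == i
  | _, _ => false

/-- The Steiner-tree reduction graph `Ĝ`. -/
def G18 (n m : ℕ) (edges : Fin m → Fin n × Fin n) : SimpleGraph (V18 n m) :=
  SimpleGraph.fromRel (fun a b => adj18 n m edges a b = true)

/-- The terminal set `𝓣 = {v'ₑ : e ∈ E} ∪ V(B̂)`. -/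
def T18 (n m : ℕ) : Set (V18 n m) :=
  {v | (∃ a, v = tnode a) ∨ (∃ j, v = edgev j)}

/-- The exposure cost of a subgraph of `Ĝ`. -/
noncomputable def scost {V : Type*} (G : SimpleGraph V) (T : G.Subgraph) : ℕ :=
  (T.verts ∪ {v | ∃ u ∈ T.verts, G.Adj u v}).ncard

/-- `q*(𝓣)`: the minimum exposure cost of a Steiner tree (connected subgraph) spanning `𝓣`. -/
noncomputable def qstar18 (n m : ℕ) (edges : Fin m → Fin n × Fin n) : ℕ :=
  sInf {c | ∃ T : (G18 n m edges).Subgraph,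
    T.Connected ∧ T18 n m ⊆ T.verts ∧ scost (G18 n m edges) T = c}

/-- `τ(G)`: the minimum size of a vertex cover of `G`. -/
noncomputable def tau (n m : ℕ) (edges : Fin m → Fin n × Fin n) : ℕ :=
  sInf {c | ∃ C : Finset (Fin n),
    (∀ j, (edges j).1 ∈ C ∨ (edges j).2 ∈ C) ∧ C.card = c}


/-! ### Auxiliary development -/

section Aux

variable {n m : ℕ} {edges : Fin m → Fin n × Fin n}

lemma tnode_inj : Function.Injective (tnode (n := n) (m := m)) :=
  fun a b h => by simpa [tnode] using h

lemma origv_inj : Function.Injective (origv (n := n) (m := m)) :=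
  fun a b h => by simpa [origv] using h

lemma hatv_inj : Function.Injective (hatv (n := n) (m := m)) :=
  fun a b h => by simpa [hatv] using h

lemma edgev_inj : Function.Injective (edgev (n := n) (m := m)) :=
  fun a b h => by simpa [edgev] using h

lemma G18_adj_iff (u v : V18 n m) :
    (G18 n m edges).Adj u v ↔
      u ≠ v ∧ (adj18 n m edges u v = true ∨ adj18 n m edges v u = true) :=
  SimpleGraph.fromRel_adj _ u v

lemma adj_tree_child {p a : Fin (2*n-1)} (h : a.val = 2*p.val+1 ∨ a.val = 2*p.val+2) :
    (G18 n m edges).Adj (tnode p) (tnode a) := by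
  rw [G18_adj_iff]
  refine ⟨?_, Or.inl ?_⟩
  · intro he
    have hpa : p = a := by simpa [tnode] using he
    subst hpa; omega
  · simp only [tnode, adj18, Bool.or_eq_true, beq_iff_eq]; exact h

lemma adj_leaf (i : Fin n) (h : (n-1) + i.val < 2*n-1) :
    (G18 n m edges).Adj (tnode ⟨(n-1)+i.val, h⟩) (origv i) := by
  rw [G18_adj_iff]
  exact ⟨by simp [tnode, origv], Or.inl (by simp [tnode, origv, adj18])⟩

lemma adj_pendant (i : Fin n) : (G18 n m edges).Adj (origv i) (hatv i) := by
  rw [G18_adj_iff]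
  exact ⟨by simp [hatv, origv], Or.inl (by simp [hatv, origv, adj18])⟩

lemma adj_edge {i : Fin n} (j : Fin m) (h : (edges j).1 = i ∨ (edges j).2 = i) :
    (G18 n m edges).Adj (origv i) (edgev j) := by
  rw [G18_adj_iff]
  refine ⟨by simp [edgev, origv], Or.inl ?_⟩
  simp only [origv, edgev, adj18, Bool.or_eq_true, beq_iff_eq]; exact h

lemma adj_tnode_cases {a : Fin (2*n-1)} {v : V18 n m}
    (h : (G18 n m edges).Adj (tnode a) v) :
    (∃ b, v = tnode b) ∨ (∃ i, v = origv i) := by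
  rw [G18_adj_iff] at h
  obtain ⟨-, h | h⟩ := h <;>
    rcases v with b | i | i | j <;>
    simp [adj18, tnode, origv, hatv, edgev] at h ⊢

lemma adj_origv_cases {i : Fin n} {v : V18 n m}
    (h : (G18 n m edges).Adj (origv i) v) :
    (∃ b, v = tnode b) ∨ v = hatv i ∨ (∃ j, v = edgev j) := by
  rw [G18_adj_iff] at h
  obtain ⟨-, h | h⟩ := h <;>
    rcases v with b | i' | i' | j <;>
    (simp [adj18, tnode, origv, hatv, edgev] at h ⊢ <;> tauto)

lemma adj_edgev_cases {j : Fin m} {v : V18 n m}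
    (h : (G18 n m edges).Adj (edgev j) v) :
    ∃ i, v = origv i ∧ ((edges j).1 = i ∨ (edges j).2 = i) := by
  rw [G18_adj_iff] at h
  obtain ⟨-, h | h⟩ := h <;>
    rcases v with b | i' | i' | j' <;>
    (simp [adj18, tnode, origv, hatv, edgev] at h ⊢ <;> tauto)

/-- The vertex set of the constructed Steiner tree. -/
def myVerts (n m : ℕ) (C : Finset (Fin n)) : Set (V18 n m) :=
  {v | (∃ a, v = tnode a) ∨ (∃ i ∈ C, v = origv i) ∨ (∃ j, v = edgev j)}

/-- Base (one-directional) adjacency of the constructed Steiner tree. -/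
def bAdj (n m : ℕ) (C : Finset (Fin n)) (f : Fin m → Fin n) : V18 n m → V18 n m → Prop
  | Sum.inl p, Sum.inl a => a.val = 2 * p.val + 1 ∨ a.val = 2 * p.val + 2
  | Sum.inl a, Sum.inr (Sum.inl i) => i ∈ C ∧ a.val = (n-1) + i.val
  | Sum.inr (Sum.inl i), Sum.inr (Sum.inr (Sum.inr j)) => i = f j
  | _, _ => False

variable (C : Finset (Fin n)) (f : Fin m → Fin n)

lemma bAdj_sub (hf : ∀ j, f j ∈ C ∧ ((edges j).1 = f j ∨ (edges j).2 = f j))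
    {u v : V18 n m} (h : bAdj n m C f u v) : (G18 n m edges).Adj u v := by
  rcases u with p | i | i | j <;> rcases v with a | i' | i' | j' <;>
    simp only [bAdj] at h <;> try exact h.elim
  · exact adj_tree_child h
  · obtain ⟨hiC, ha⟩ := h
    have hb : (n-1) + i'.val < 2*n-1 := ha ▸ p.isLt
    have hpe : p = ⟨(n-1)+i'.val, hb⟩ := Fin.ext ha
    rw [hpe]
    exact adj_leaf i' hb
  · subst h
    exact adj_edge j' (hf j').2

lemma bAdj_mem (hf : ∀ j, f j ∈ C ∧ ((edges j).1 = f j ∨ (edges j).2 = f j))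
    {u v : V18 n m} (h : bAdj n m C f u v) :
    u ∈ myVerts n m C ∧ v ∈ myVerts n m C := by
  rcases u with p | i | i | j <;> rcases v with a | i' | i' | j' <;>
    simp only [bAdj] at h <;> try exact h.elim
  · exact ⟨Or.inl ⟨p, rfl⟩, Or.inl ⟨a, rfl⟩⟩
  · exact ⟨Or.inl ⟨p, rfl⟩, Or.inr (Or.inl ⟨i', h.1, rfl⟩)⟩
  · refine ⟨Or.inr (Or.inl ⟨i, ?_, rfl⟩), Or.inr (Or.inr ⟨j', rfl⟩)⟩
    rw [h]; exact (hf j').1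

/-- The constructed Steiner tree, given a vertex cover `C` and an endpoint
selection function `f`. -/
def mySub (hf : ∀ j, f j ∈ C ∧ ((edges j).1 = f j ∨ (edges j).2 = f j)) :
    (G18 n m edges).Subgraph where
  verts := myVerts n m C
  Adj u v := bAdj n m C f u v ∨ bAdj n m C f v u
  adj_sub h := h.elim (fun h => bAdj_sub C f hf h) (fun h => (bAdj_sub C f hf h).symm)
  edge_vert h := h.elim (fun h => (bAdj_mem C f hf h).1) (fun h => (bAdj_mem C f hf h).2)
  symm := ⟨fun u v h => Or.symm h⟩

lemma mySub_connected (hn : 1 ≤ n)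
    (hf : ∀ j, f j ∈ C ∧ ((edges j).1 = f j ∨ (edges j).2 = f j)) :
    (mySub (edges := edges) C f hf).Connected := by
  set T := mySub (edges := edges) C f hf with hT
  have h0 : (0:ℕ) < 2*n-1 := by omega
  have hroot : tnode (n := n) (m := m) ⟨0, h0⟩ ∈ T.verts := Or.inl ⟨_, rfl⟩
  have treach : ∀ (k : ℕ) (a : Fin (2*n-1)), a.val ≤ k →
      T.coe.Reachable ⟨tnode a, Or.inl ⟨a, rfl⟩⟩ ⟨tnode ⟨0, h0⟩, hroot⟩ := by
    intro k
    induction k with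
    | zero =>
      intro a ha
      have : a = ⟨0, h0⟩ := Fin.ext (show a.val = 0 by omega)
      rw [this]
    | succ k ih =>
      intro a ha
      by_cases hz : a.val = 0
      · have : a = ⟨0, h0⟩ := Fin.ext hz
        rw [this]
      · have hp : (a.val - 1)/2 < 2*n-1 := by omega
        have hch : a.val = 2*((a.val-1)/2)+1 ∨ a.val = 2*((a.val-1)/2)+2 := by omega
        have hadj : T.Adj (tnode ⟨(a.val-1)/2, hp⟩) (tnode a) := Or.inl hch
        have step : T.coe.Adj ⟨tnode ⟨(a.val-1)/2, hp⟩, Or.inl ⟨_, rfl⟩⟩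
            ⟨tnode a, Or.inl ⟨a, rfl⟩⟩ := hadj
        exact step.symm.reachable.trans (ih ⟨(a.val-1)/2, hp⟩ (show (a.val-1)/2 ≤ k by omega))
  have reach : ∀ (v : V18 n m) (hv : v ∈ T.verts),
      T.coe.Reachable ⟨v, hv⟩ ⟨tnode ⟨0, h0⟩, hroot⟩ := by
    have oreach : ∀ (i : Fin n) (hiC : i ∈ C),
        T.coe.Reachable ⟨origv i, Or.inr (Or.inl ⟨i, hiC, rfl⟩)⟩ ⟨tnode ⟨0, h0⟩, hroot⟩ := by
      intro i hiC
      have hb : (n-1) + i.val < 2*n-1 := by have := i.isLt; omega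
      have hadj : T.Adj (tnode ⟨(n-1)+i.val, hb⟩) (origv i) := Or.inl ⟨hiC, rfl⟩
      have step : T.coe.Adj ⟨tnode ⟨(n-1)+i.val, hb⟩, Or.inl ⟨_, rfl⟩⟩
          ⟨origv i, Or.inr (Or.inl ⟨i, hiC, rfl⟩)⟩ := hadj
      exact step.symm.reachable.trans (treach _ _ le_rfl)
    intro v hv
    rcases hv with ⟨a, rfl⟩ | ⟨i, hiC, rfl⟩ | ⟨j, rfl⟩
    · exact treach a.val a le_rfl
    · exact oreach i hiC
    · have hadj : T.Adj (origv (f j)) (edgev j) := Or.inl rfl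
      have step : T.coe.Adj ⟨origv (f j), Or.inr (Or.inl ⟨f j, (hf j).1, rfl⟩)⟩
          ⟨edgev j, Or.inr (Or.inr ⟨j, rfl⟩)⟩ := hadj
      exact step.symm.reachable.trans (oreach (f j) (hf j).1)
  rw [SimpleGraph.Subgraph.connected_iff]
  exact ⟨⟨fun u v => (reach u.val u.2).trans (reach v.val v.2).symm⟩, ⟨_, hroot⟩⟩

/-- The finset of exposed vertices. -/
def F18 (n m : ℕ) (C : Finset (Fin n)) : Finset (V18 n m) :=
  ((univ.image tnode ∪ univ.image origv) ∪ univ.image edgev) ∪ C.image hatv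

lemma mem_F18 {x : V18 n m} :
    x ∈ F18 n m C ↔ ((∃ a, x = tnode a) ∨ (∃ i, x = origv i) ∨
      (∃ j, x = edgev j) ∨ (∃ i ∈ C, x = hatv i)) := by
  simp only [F18, Finset.mem_union, Finset.mem_image, Finset.mem_univ, true_and]
  constructor
  · rintro (((⟨a, rfl⟩ | ⟨i, rfl⟩) | ⟨j, rfl⟩) | ⟨i, hi, rfl⟩)
    · exact Or.inl ⟨_, rfl⟩
    · exact Or.inr (Or.inl ⟨_, rfl⟩)
    · exact Or.inr (Or.inr (Or.inl ⟨_, rfl⟩))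
    · exact Or.inr (Or.inr (Or.inr ⟨_, hi, rfl⟩))
  · rintro (⟨a, rfl⟩ | ⟨i, rfl⟩ | ⟨j, rfl⟩ | ⟨i, hi, rfl⟩)
    · exact Or.inl (Or.inl (Or.inl ⟨_, rfl⟩))
    · exact Or.inl (Or.inl (Or.inr ⟨_, rfl⟩))
    · exact Or.inl (Or.inr ⟨_, rfl⟩)
    · exact Or.inr ⟨_, hi, rfl⟩

lemma F18_card : (F18 n m C).card = ((2*n-1) + n + m) + C.card := by
  have d1 : Disjoint (univ.image (tnode (n := n) (m := m))) (univ.image origv) := by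
    simp only [Finset.disjoint_left, Finset.mem_image]
    rintro x ⟨a, -, rfl⟩ ⟨i, -, h⟩
    simp [tnode, origv] at h
  have d2 : Disjoint ((univ.image (tnode (n := n) (m := m))) ∪ univ.image origv)
      (univ.image edgev) := by
    simp only [Finset.disjoint_left, Finset.mem_union, Finset.mem_image]
    rintro x (⟨a, -, rfl⟩ | ⟨i, -, rfl⟩) ⟨j, -, h⟩ <;>
      simp [tnode, origv, edgev] at h
  have d3 : Disjoint (((univ.image (tnode (n := n) (m := m))) ∪ univ.image origv) ∪
      univ.image edgev) (C.image hatv) := by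
    simp only [Finset.disjoint_left, Finset.mem_union, Finset.mem_image]
    rintro x ((⟨a, -, rfl⟩ | ⟨i, -, rfl⟩) | ⟨j, -, rfl⟩) ⟨i', -, h⟩ <;>
      simp [tnode, origv, edgev, hatv] at h
  rw [F18, Finset.card_union_of_disjoint d3, Finset.card_union_of_disjoint d2,
    Finset.card_union_of_disjoint d1,
    Finset.card_image_of_injective _ tnode_inj,
    Finset.card_image_of_injective _ origv_inj,
    Finset.card_image_of_injective _ edgev_inj,
    Finset.card_image_of_injective _ hatv_inj]
  simp

/-- The exposed set of any spanning subgraph contains `F18` built on the set of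
original vertices it uses. -/
lemma F18_subset_exposed (hn : 1 ≤ n) (T : (G18 n m edges).Subgraph)
    (hTn : ∀ a, tnode a ∈ T.verts) (hTe : ∀ j, edgev j ∈ T.verts)
    (hTC : ∀ i ∈ C, origv i ∈ T.verts) :
    (F18 n m C : Set (V18 n m)) ⊆
      T.verts ∪ {v | ∃ u ∈ T.verts, (G18 n m edges).Adj u v} := by
  intro x hx
  rw [Finset.mem_coe, mem_F18] at hx
  rcases hx with ⟨a, rfl⟩ | ⟨i, rfl⟩ | ⟨j, rfl⟩ | ⟨i, hi, rfl⟩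
  · exact Or.inl (hTn a)
  · have hb : (n-1) + i.val < 2*n-1 := by have := i.isLt; omega
    exact Or.inr ⟨tnode ⟨(n-1)+i.val, hb⟩, hTn _, adj_leaf i hb⟩
  · exact Or.inl (hTe j)
  · exact Or.inr ⟨origv i, hTC i hi, adj_pendant i⟩

lemma mySub_cost (hn : 1 ≤ n)
    (hf : ∀ j, f j ∈ C ∧ ((edges j).1 = f j ∨ (edges j).2 = f j)) :
    scost (G18 n m edges) (mySub (edges := edges) C f hf) = ((2*n-1) + n + m) + C.card := by
  set T := mySub (edges := edges) C f hf with hT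
  have hset : T.verts ∪ {v | ∃ u ∈ T.verts, (G18 n m edges).Adj u v}
      = (F18 n m C : Set (V18 n m)) := by
    apply Set.Subset.antisymm
    · rintro x (hx | ⟨u, hu, hadj⟩)
      · rw [Finset.mem_coe, mem_F18]
        rcases hx with ⟨a, rfl⟩ | ⟨i, hi, rfl⟩ | ⟨j, rfl⟩
        · exact Or.inl ⟨a, rfl⟩
        · exact Or.inr (Or.inl ⟨i, rfl⟩)
        · exact Or.inr (Or.inr (Or.inl ⟨j, rfl⟩))
      · rw [Finset.mem_coe, mem_F18]
        rcases hu with ⟨a, rfl⟩ | ⟨i, hi, rfl⟩ | ⟨j, rfl⟩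
        · rcases adj_tnode_cases hadj with ⟨b, rfl⟩ | ⟨i, rfl⟩
          · exact Or.inl ⟨b, rfl⟩
          · exact Or.inr (Or.inl ⟨i, rfl⟩)
        · rcases adj_origv_cases hadj with ⟨b, rfl⟩ | rfl | ⟨j, rfl⟩
          · exact Or.inl ⟨b, rfl⟩
          · exact Or.inr (Or.inr (Or.inr ⟨i, hi, rfl⟩))
          · exact Or.inr (Or.inr (Or.inl ⟨j, rfl⟩))
        · obtain ⟨i, rfl, -⟩ := adj_edgev_cases hadj
          exact Or.inr (Or.inl ⟨i, rfl⟩)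
    · exact F18_subset_exposed C hn T (fun a => Or.inl ⟨a, rfl⟩)
        (fun j => Or.inr (Or.inr ⟨j, rfl⟩)) (fun i hi => Or.inr (Or.inl ⟨i, hi, rfl⟩))
  rw [scost, hset, Set.ncard_coe_finset, F18_card]

lemma exists_adj_of_reachable {V : Type*} {G : SimpleGraph V} {u v : V}
    (h : G.Reachable u v) (hne : u ≠ v) : ∃ w, G.Adj u w := by
  obtain ⟨p⟩ := h
  cases p with
  | nil => exact absurd rfl hne
  | cons h _ => exact ⟨_, h⟩

end Aux


section Lower
variable {n m : ℕ} {edges : Fin m → Fin n × Fin n}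

lemma cost_lower (hn : 1 ≤ n) (T : (G18 n m edges).Subgraph)
    (hc : T.Connected) (hs : T18 n m ⊆ T.verts) :
    ((2*n-1) + n + m) + tau n m edges ≤ scost (G18 n m edges) T := by
  classical
  set CT : Finset (Fin n) := univ.filter (fun i => origv i ∈ T.verts) with hCT
  have h0 : (0:ℕ) < 2*n-1 := by omega
  have hroot : tnode (n := n) (m := m) ⟨0, h0⟩ ∈ T.verts := hs (Or.inl ⟨_, rfl⟩)
  have cover : ∀ j, (edges j).1 ∈ CT ∨ (edges j).2 ∈ CT := by
    intro j
    have hj : edgev j ∈ T.verts := hs (Or.inr ⟨j, rfl⟩)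
    have hreach : T.coe.Reachable ⟨edgev j, hj⟩ ⟨tnode ⟨0, h0⟩, hroot⟩ :=
      hc ⟨edgev j, hj⟩ _
    have hne : (⟨edgev j, hj⟩ : T.verts) ≠ ⟨tnode ⟨0, h0⟩, hroot⟩ := by
      simp [edgev, tnode, Subtype.ext_iff]
    obtain ⟨w, hw⟩ := exists_adj_of_reachable hreach hne
    have hTadj : T.Adj (edgev j) w.val := hw
    obtain ⟨i, hiw, hend⟩ := adj_edgev_cases (T.adj_sub hTadj)
    have hiv : origv i ∈ T.verts := hiw ▸ w.2
    have hiCT : i ∈ CT := by simp [hCT, hiv]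
    rcases hend with h | h
    · exact Or.inl (h ▸ hiCT)
    · exact Or.inr (h ▸ hiCT)
  have htau : tau n m edges ≤ CT.card := Nat.sInf_le ⟨CT, cover, rfl⟩
  have hsub := F18_subset_exposed (edges := edges) CT hn T
      (fun a => hs (Or.inl ⟨a, rfl⟩)) (fun j => hs (Or.inr ⟨j, rfl⟩))
      (fun i hi => (Finset.mem_filter.mp hi).2)
  calc ((2*n-1) + n + m) + tau n m edges
      ≤ ((2*n-1) + n + m) + CT.card := by omega
    _ = (F18 n m CT).card := (F18_card CT).symm
    _ = ((F18 n m CT : Set (V18 n m))).ncard := (Set.ncard_coe_finset _).symm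
    _ ≤ scost (G18 n m edges) T := Set.ncard_le_ncard hsub (Set.toFinite _)

end Lower

/-- In the Steiner-tree hardness reduction graph `Ĝ` built from a simple graph `G` of
maximum degree 3, the minimum secluded Steiner tree cost for the terminals
`𝓣 = {v'ₑ} ∪ V(B̂)` equals `|𝓣| + |V(G)| + τ(G)`, where `|𝓣| = (2n−1) + m`. -/
theorem qstar_eq_terminals_add_vertexCover (n m : ℕ) (hn : 1 ≤ n)
    (edges : Fin m → Fin n × Fin n)
    (hsimple : ∀ j, (edges j).1 ≠ (edges j).2)
    (hdeg3 : ∀ i : Fin n,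
      (univ.filter (fun j => (edges j).1 = i ∨ (edges j).2 = i)).card ≤ 3) :
    qstar18 n m edges = ((2 * n - 1) + m) + n + tau n m edges := by
  classical
  have hne : {c | ∃ C : Finset (Fin n),
      (∀ j, (edges j).1 ∈ C ∨ (edges j).2 ∈ C) ∧ C.card = c}.Nonempty :=
    ⟨n, univ, fun j => Or.inl (mem_univ _), by simp⟩
  obtain ⟨C, hC, hCcard⟩ :
      ∃ C : Finset (Fin n), (∀ j, (edges j).1 ∈ C ∨ (edges j).2 ∈ C) ∧
        C.card = tau n m edges :=
    Nat.sInf_mem hne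
  set f : Fin m → Fin n := fun j => if (edges j).1 ∈ C then (edges j).1 else (edges j).2
    with hfdef
  have hf : ∀ j, f j ∈ C ∧ ((edges j).1 = f j ∨ (edges j).2 = f j) := by
    intro j
    by_cases h : (edges j).1 ∈ C
    · simp [hfdef, h]
    · rcases hC j with h1 | h2
      · exact absurd h1 h
      · simp [hfdef, h, h2]
  have hmem : ∃ T : (G18 n m edges).Subgraph, T.Connected ∧ T18 n m ⊆ T.verts ∧
      scost (G18 n m edges) T = ((2 * n - 1) + m) + n + tau n m edges := by
    refine ⟨mySub (edges := edges) C f hf, mySub_connected C f hn hf, ?_, ?_⟩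
    · rintro v (⟨a, rfl⟩ | ⟨j, rfl⟩)
      · exact Or.inl ⟨a, rfl⟩
      · exact Or.inr (Or.inr ⟨j, rfl⟩)
    · rw [mySub_cost C f hn hf, hCcard]
      omega
  rw [qstar18]
  refine le_antisymm (Nat.sInf_le hmem) (le_csInf ⟨_, hmem⟩ ?_)
  rintro c ⟨T, hTc, hTs, rfl⟩
  have := cost_lower hn T hTc hTs
  omega
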